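/- Let n ≥ 1, 0 ≤ k ≤ 2^n. Consider the unit vector ψ = 2^{-n/2}(Σ_{j=0}^{k-1} e_j + i Σ_{j=k}^{2^n-1} e_j) in ℂ^{2^n}, where e_j is the standard basis. The squared modulus of its inner product with the uniform vector u = 2^{-n/2} Σ_j e_j equals (k² + (2^n - k)²)/4^n, which equals (1 + tan²(θ*/2))/2 when k = 2^{n-1}(1 + tan(θ*/2)) for θ* ∈ [-π/2, π/2]. -/

import Mathlib

open Real

theorem stmt_16 (n k : ℕ) (hn : 1 ≤ n) (hk : k ≤ 2 ^ n)
    (ψ u : EuclideanSpace ℂ (Fin (2 ^ n)))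
    (hψ : ψ = fun j : Fin (2 ^ n) => (if (j : ℕ) < k then 1 else Complex.I) / (Real.sqrt (2 ^ n) : ℂ))
    (hu : u = fun _ : Fin (2 ^ n) => 1 / (Real.sqrt (2 ^ n) : ℂ)) :
    ‖inner (𝕜 := ℂ) u ψ‖ ^ 2
      = ((k : ℝ) ^ 2 + ((2 ^ n : ℝ) - k) ^ 2) / 4 ^ n ∧
    ∀ θs : ℝ, θs ∈ Set.Icc (-(π / 2)) (π / 2) →
      (k : ℝ) = 2 ^ (n - 1) * (1 + Real.tan (θs / 2)) →
      ‖inner (𝕜 := ℂ) u ψ‖ ^ 2 = (1 + Real.tan (θs / 2) ^ 2) / 2 := by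
  have hNR : (0:ℝ) < 2 ^ n := by positivity
  have hsq : ((Real.sqrt (2 ^ n) : ℝ) : ℂ) * ((Real.sqrt (2 ^ n) : ℝ) : ℂ) = ((2:ℂ) ^ n) := by
    rw [← Complex.ofReal_mul, Real.mul_self_sqrt (le_of_lt hNR)]
    push_cast
    ring
  have h4 : (4:ℝ) ^ n = (2:ℝ) ^ n * 2 ^ n := by
    rw [← mul_pow]; norm_num
  have hinner : (inner (𝕜 := ℂ) u ψ : ℂ)
      = ((k : ℂ) + ((2 ^ n - k : ℕ) : ℂ) * Complex.I) / (2 ^ n) := by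
    rw [PiLp.inner_apply]
    simp only [hψ, hu]
    simp only [RCLike.inner_apply, map_div₀, Complex.conj_ofReal, map_one]
    have : ∀ j : Fin (2 ^ n),
        1 / ((Real.sqrt (2 ^ n) : ℝ) : ℂ) *
          ((if (j : ℕ) < k then 1 else Complex.I) / (Real.sqrt (2 ^ n) : ℂ))
        = (if (j : ℕ) < k then 1 else Complex.I) / (2 ^ n) := by
      intro j
      rw [div_mul_div_comm, one_mul, hsq]
    rw [Finset.sum_congr rfl (fun j _ => (mul_comm _ _).trans (this j))]
    rw [← Finset.sum_div]
    congr 1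
    rw [Fin.sum_univ_eq_sum_range (fun j => if j < k then (1:ℂ) else Complex.I)]
    rw [Finset.range_eq_Ico, ← Finset.sum_Ico_consecutive _ (Nat.zero_le k) hk]
    rw [Finset.sum_congr rfl (fun j hj => if_pos (Finset.mem_Ico.mp hj).2),
      Finset.sum_congr (rfl : Finset.Ico k (2^n) = _)
        (fun j hj => if_neg (Nat.not_lt.mpr (Finset.mem_Ico.mp hj).1))]
    simp [Nat.card_Ico, mul_comm]
  have habs : ‖inner (𝕜 := ℂ) u ψ‖ ^ 2
      = ((k : ℝ) ^ 2 + ((2 ^ n : ℝ) - k) ^ 2) / 4 ^ n := by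
    rw [hinner, Complex.sq_norm, Complex.normSq_div]
    have h1 : ((k : ℂ) + ((2 ^ n - k : ℕ) : ℂ) * Complex.I)
        = ((k : ℝ) : ℂ) + (((2 ^ n : ℝ) - k : ℝ) : ℂ) * Complex.I := by
      push_cast [hk]
      ring
    have h2 : ((2:ℂ) ^ n) = (((2:ℝ) ^ n : ℝ) : ℂ) := by push_cast; ring
    rw [h1, h2, Complex.normSq_add_mul_I, Complex.normSq_ofReal, h4]
  refine ⟨habs, fun θs _ hkt => ?_⟩
  rw [habs]
  have hn' : n - 1 + 1 = n := Nat.succ_pred_eq_of_pos hn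
  have h2n : (2:ℝ) ^ n = 2 ^ (n-1) * 2 := by rw [← pow_succ, hn']
  have hP : (0:ℝ) < 2 ^ (n-1) := by positivity
  rw [hkt, h4, h2n]
  field_simp
  ring
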